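/- arXiv:1607.03594 — 6 statements merged into one kernel-verified Lean document; each statement's English description precedes it below -/
import Mathlib

section
/- Let ℓ : {0,1} × [0,1] → ℝ be a proper loss bounded by B. Let S be a nonempty finite index set, let y_t ∈ {0,1} for t ∈ S, let n = |S| and ρ = (Σ_{t∈S} y_t)/n be the empirical frequency of 1s. Then for all r, q ∈ [0,1]: Σ_{t∈S} (ℓ(y_t, r) − ℓ(y_t, q)) ≤ 2·B·n·|ρ − r|. -/
open scoped BigOperators

/-- For a proper loss `ℓ` bounded by `B`, a nonempty finite index set `S`
with binary outcomes `y t ∈ {0,1}` and empirical frequency `ρ`, any two predictions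
`r, q ∈ [0,1]` satisfy `∑_{t∈S} (ℓ(y_t, r) − ℓ(y_t, q)) ≤ 2·B·|S|·|ρ − r|`. -/
theorem stmt0 {α : Type*} (S : Finset α) (hS : S.Nonempty)
    (y : α → ℝ) (hy : ∀ t ∈ S, y t = 0 ∨ y t = 1)
    (ℓ : ℝ → ℝ → ℝ) (B : ℝ)
    (hproper : ∀ p ∈ Set.Icc (0:ℝ) 1, ∀ q ∈ Set.Icc (0:ℝ) 1,
      p * ℓ 1 p + (1 - p) * ℓ 0 p ≤ p * ℓ 1 q + (1 - p) * ℓ 0 q)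
    (hbound : ∀ y' ∈ ({0, 1} : Set ℝ), ∀ q ∈ Set.Icc (0:ℝ) 1,
      0 ≤ ℓ y' q ∧ ℓ y' q ≤ B)
    (ρ : ℝ) (hρ : ρ = (∑ t ∈ S, y t) / (S.card : ℝ)) :
    ∀ r ∈ Set.Icc (0:ℝ) 1, ∀ q ∈ Set.Icc (0:ℝ) 1,
      ∑ t ∈ S, (ℓ (y t) r - ℓ (y t) q) ≤ 2 * B * (S.card : ℝ) * |ρ - r| := by
  intro r hr q hq
  have hnpos : (0:ℝ) < (S.card : ℝ) := by exact_mod_cast Finset.card_pos.mpr hS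
  have key : ∀ c : ℝ, ∑ t ∈ S, ℓ (y t) c
      = (∑ t ∈ S, y t) * ℓ 1 c + ((S.card : ℝ) - ∑ t ∈ S, y t) * ℓ 0 c := by
    intro c
    have h1 : ∑ t ∈ S, ℓ (y t) c = ∑ t ∈ S, (y t * ℓ 1 c + (1 - y t) * ℓ 0 c) := by
      apply Finset.sum_congr rfl
      intro t ht
      rcases hy t ht with h | h <;> simp [h]
    rw [h1, Finset.sum_add_distrib, ← Finset.sum_mul, ← Finset.sum_mul,
      Finset.sum_sub_distrib]
    simp [sub_mul]
  have hm : ∑ t ∈ S, y t = ρ * (S.card : ℝ) := by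
    rw [hρ]; field_simp
  have h1r := hbound 1 (by simp) r hr
  have h0r := hbound 0 (by simp) r hr
  have h1q := hbound 1 (by simp) q hq
  have h0q := hbound 0 (by simp) q hq
  have hp := hproper r hr q hq
  have hX : |(ℓ 1 r - ℓ 1 q) - (ℓ 0 r - ℓ 0 q)| ≤ 2 * B := by
    rw [abs_le]; constructor <;> linarith [h1r.1, h1r.2, h0r.1, h0r.2, h1q.1, h1q.2, h0q.1, h0q.2]
  have hstep : (ρ - r) * ((ℓ 1 r - ℓ 1 q) - (ℓ 0 r - ℓ 0 q)) ≤ |ρ - r| * (2 * B) := by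
    calc (ρ - r) * ((ℓ 1 r - ℓ 1 q) - (ℓ 0 r - ℓ 0 q))
        ≤ |(ρ - r) * ((ℓ 1 r - ℓ 1 q) - (ℓ 0 r - ℓ 0 q))| := le_abs_self _
      _ = |ρ - r| * |(ℓ 1 r - ℓ 1 q) - (ℓ 0 r - ℓ 0 q)| := abs_mul _ _
      _ ≤ |ρ - r| * (2 * B) := mul_le_mul_of_nonneg_left hX (abs_nonneg _)
  have hmain : ρ * (ℓ 1 r - ℓ 1 q) + (1 - ρ) * (ℓ 0 r - ℓ 0 q) ≤ 2 * B * |ρ - r| := by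
    nlinarith [hstep, hp]
  rw [Finset.sum_sub_distrib, key r, key q, hm]
  have hrw : ρ * (S.card : ℝ) * ℓ 1 r + ((S.card : ℝ) - ρ * (S.card : ℝ)) * ℓ 0 r
      - (ρ * (S.card : ℝ) * ℓ 1 q + ((S.card : ℝ) - ρ * (S.card : ℝ)) * ℓ 0 q)
      = (S.card : ℝ) * (ρ * (ℓ 1 r - ℓ 1 q) + (1 - ρ) * (ℓ 0 r - ℓ 0 q)) := by ring
  rw [hrw]
  calc (S.card : ℝ) * (ρ * (ℓ 1 r - ℓ 1 q) + (1 - ρ) * (ℓ 0 r - ℓ 0 q))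
      ≤ (S.card : ℝ) * (2 * B * |ρ - r|) := mul_le_mul_of_nonneg_left hmain hnpos.le
    _ = 2 * B * (S.card : ℝ) * |ρ - r| := by ring
end

section
/- Let ℓ : {0,1} × [0,1] → ℝ be a proper loss bounded by B, let N ≥ 1, and let y_1,…,y_T ∈ {0,1} be outcomes with forecasts p_1,…,p_T taking values in the grid G_N = {i/N : i = 0,…,N}. Then the internal regret satisfies, for every pair i, j ∈ {0,…,N}: Σ_{t : p_t = i/N} (ℓ(y_t, i/N) − ℓ(y_t, j/N)) ≤ 2·B·T·C_T^1, where C_T^1 is the ℓ1 calibration error of the forecasts. -/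
open scoped BigOperators Classical

/-- The ℓ1 calibration error `C_T^1 = (1/T) · ∑_{i=0}^N |∑_{t : p_t = i/N} (y_t − i/N)|`
of forecasts `p` against outcomes `y`. -/
noncomputable def calErrL1 (T N : ℕ) (p y : Fin T → ℝ) : ℝ :=
  (1 / (T : ℝ)) * ∑ i ∈ Finset.range (N + 1),
    |∑ t ∈ Finset.univ.filter (fun t => p t = (i : ℝ) / N), (y t - (i : ℝ) / N)|

/-- For a proper loss bounded by `B` and forecasts on the grid
`{i/N : i = 0,…,N}`, the internal regret of every pair `(i, j)` is at most
`2·B·T·C_T^1`. -/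
theorem stmt1 (T N : ℕ) (hN : 1 ≤ N) (y p : Fin T → ℝ)
    (hy : ∀ t, y t = 0 ∨ y t = 1)
    (hp : ∀ t, ∃ i ∈ Finset.range (N + 1), p t = (i : ℝ) / N)
    (ℓ : ℝ → ℝ → ℝ) (B : ℝ)
    (hproper : ∀ p' ∈ Set.Icc (0:ℝ) 1, ∀ q ∈ Set.Icc (0:ℝ) 1,
      p' * ℓ 1 p' + (1 - p') * ℓ 0 p' ≤ p' * ℓ 1 q + (1 - p') * ℓ 0 q)
    (hbound : ∀ y' ∈ ({0, 1} : Set ℝ), ∀ q ∈ Set.Icc (0:ℝ) 1,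
      0 ≤ ℓ y' q ∧ ℓ y' q ≤ B) :
    ∀ i ∈ Finset.range (N + 1), ∀ j ∈ Finset.range (N + 1),
      ∑ t ∈ Finset.univ.filter (fun t => p t = (i : ℝ) / N),
          (ℓ (y t) ((i : ℝ) / N) - ℓ (y t) ((j : ℝ) / N))
        ≤ 2 * B * (T : ℝ) * calErrL1 T N p y := by
  intro i hi j hj
  have hi' : i ≤ N := Nat.lt_succ_iff.mp (Finset.mem_range.mp hi)
  have hj' : j ≤ N := Nat.lt_succ_iff.mp (Finset.mem_range.mp hj)
  have hNpos : (0:ℝ) < N := by exact_mod_cast hN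
  set α : ℝ := (i : ℝ) / N with hα
  set β : ℝ := (j : ℝ) / N with hβ
  have hαmem : α ∈ Set.Icc (0:ℝ) 1 := by
    constructor
    · positivity
    · rw [hα, div_le_one hNpos]; exact_mod_cast hi'
  have hβmem : β ∈ Set.Icc (0:ℝ) 1 := by
    constructor
    · positivity
    · rw [hβ, div_le_one hNpos]; exact_mod_cast hj'
  set S := Finset.univ.filter (fun t => p t = α) with hS
  set A1 : ℝ := ℓ 1 α - ℓ 1 β with hA1
  set A0 : ℝ := ℓ 0 α - ℓ 0 β with hA0
  set Δ : ℝ := ∑ t ∈ S, (y t - α) with hΔ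
  set n : ℝ := (S.card : ℝ) with hn
  have hnn : 0 ≤ n := by positivity
  have hsumy : ∑ t ∈ S, y t = n * α + Δ := by
    have : Δ = (∑ t ∈ S, y t) - n * α := by
      rw [hΔ, Finset.sum_sub_distrib, Finset.sum_const, nsmul_eq_mul] <;> try ring
    linarith
  have hsum : ∑ t ∈ S, (ℓ (y t) α - ℓ (y t) β)
      = n * (α * A1 + (1 - α) * A0) + Δ * (A1 - A0) := by
    have h1 : ∑ t ∈ S, (ℓ (y t) α - ℓ (y t) β)
        = ∑ t ∈ S, (y t * A1 + (1 - y t) * A0) := by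
      apply Finset.sum_congr rfl
      intro t _
      rcases hy t with h | h <;> rw [h] <;> simp [hA1, hA0] <;> ring
    rw [h1]
    have h2 : ∑ t ∈ S, (y t * A1 + (1 - y t) * A0)
        = (∑ t ∈ S, y t) * A1 + (n - ∑ t ∈ S, y t) * A0 := by
      rw [Finset.sum_add_distrib, ← Finset.sum_mul, ← Finset.sum_mul,
        Finset.sum_sub_distrib, Finset.sum_const, nsmul_eq_mul, mul_one]
    rw [h2, hsumy]; ring
  -- properness term is nonpositive
  have hprop : α * A1 + (1 - α) * A0 ≤ 0 := by
    have := hproper α hαmem β hβmem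
    rw [hA1, hA0]; linarith
  -- bounds on losses
  have h1α := hbound 1 (by simp) α hαmem
  have h1β := hbound 1 (by simp) β hβmem
  have h0α := hbound 0 (by simp) α hαmem
  have h0β := hbound 0 (by simp) β hβmem
  have hBnn : 0 ≤ B := le_trans h1α.1 h1α.2
  have hA : A1 - A0 ≤ 2 * B ∧ -(2 * B) ≤ A1 - A0 := by
    constructor <;> (rw [hA1, hA0]; cases h1α; cases h1β; cases h0α; cases h0β; linarith)
  have hΔA : Δ * (A1 - A0) ≤ |Δ| * (2 * B) := by
    calc Δ * (A1 - A0) ≤ |Δ * (A1 - A0)| := le_abs_self _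
    _ = |Δ| * |A1 - A0| := abs_mul _ _
    _ ≤ |Δ| * (2 * B) := by
        apply mul_le_mul_of_nonneg_left _ (abs_nonneg _)
        rw [abs_le]; exact ⟨hA.2, hA.1⟩
  -- |Δ| ≤ T * calErrL1
  have hcal : |Δ| ≤ (T : ℝ) * calErrL1 T N p y := by
    rcases Nat.eq_zero_or_pos T with hT | hT
    · subst hT
      have : Δ = 0 := by
        rw [hΔ]
        apply Finset.sum_eq_zero
        intro t _
        exact absurd t.2 (by simp)
      simp [this]
    · have hTpos : (0:ℝ) < T := by exact_mod_cast hT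
      have hle : |Δ| ≤ ∑ k ∈ Finset.range (N + 1),
          |∑ t ∈ Finset.univ.filter (fun t => p t = (k : ℝ) / N), (y t - (k : ℝ) / N)| := by
        have := Finset.single_le_sum
          (f := fun (k : ℕ) => |∑ t ∈ Finset.univ.filter (fun t => p t = (k : ℝ) / N),
            (y t - (k : ℝ) / N)|)
          (s := Finset.range (N + 1))
          (fun k _ => abs_nonneg _) hi
        simpa [hΔ, hS, hα] using this
      rw [calErrL1]
      calc |Δ| ≤ _ := hle
      _ = (T : ℝ) * ((1 / (T : ℝ)) * _) := by
          rw [← mul_assoc, mul_one_div_cancel hTpos.ne', one_mul]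
      _ ≤ _ := le_refl _
  have hcalnn : 0 ≤ (T : ℝ) * calErrL1 T N p y := le_trans (abs_nonneg _) hcal
  calc ∑ t ∈ S, (ℓ (y t) α - ℓ (y t) β)
      = n * (α * A1 + (1 - α) * A0) + Δ * (A1 - A0) := hsum
    _ ≤ 0 + |Δ| * (2 * B) := by
        have := mul_nonpos_of_nonneg_of_nonpos hnn hprop
        linarith
    _ ≤ 0 + ((T : ℝ) * calErrL1 T N p y) * (2 * B) := by
        apply add_le_add_right
        apply mul_le_mul_of_nonneg_right hcal (by positivity)
    _ = 2 * B * (T : ℝ) * calErrL1 T N p y := by ring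
end

section
/- Let ℓ : {0,1} × [0,1] → ℝ be a proper loss bounded by B, let N ≥ 1, and let y_1,…,y_T ∈ {0,1} be outcomes with forecasts p_1,…,p_T taking values in the grid G_N = {i/N : i = 0,…,N}. Then for every q ∈ [0,1]: (1/T) Σ_{t=1}^T ℓ(y_t, p_t) ≤ (1/T) Σ_{t=1}^T ℓ(y_t, q) + 2·B·C_T^1, where C_T^1 is the ℓ1 calibration error of the forecasts. In particular, a calibrated predictor is at least as accurate as any constant predictor, up to 2·B·C_T^1. -/
open scoped BigOperators Classical

/-- For a proper loss bounded by `B` and forecasts on the grid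
`{i/N : i = 0,…,N}`, the average loss of the forecasts exceeds the average loss
of any constant prediction `q ∈ [0,1]` by at most `2·B·C_T^1`. -/
theorem stmt3 (T N : ℕ) (hN : 1 ≤ N) (y p : Fin T → ℝ)
    (hy : ∀ t, y t = 0 ∨ y t = 1)
    (hp : ∀ t, ∃ i ∈ Finset.range (N + 1), p t = (i : ℝ) / N)
    (ℓ : ℝ → ℝ → ℝ) (B : ℝ)
    (hproper : ∀ p' ∈ Set.Icc (0:ℝ) 1, ∀ q ∈ Set.Icc (0:ℝ) 1,
      p' * ℓ 1 p' + (1 - p') * ℓ 0 p' ≤ p' * ℓ 1 q + (1 - p') * ℓ 0 q)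
    (hbound : ∀ y' ∈ ({0, 1} : Set ℝ), ∀ q ∈ Set.Icc (0:ℝ) 1,
      0 ≤ ℓ y' q ∧ ℓ y' q ≤ B) :
    ∀ q ∈ Set.Icc (0:ℝ) 1,
      (1 / (T : ℝ)) * ∑ t, ℓ (y t) (p t)
        ≤ (1 / (T : ℝ)) * ∑ t, ℓ (y t) q + 2 * B * calErrL1 T N p y := by
  intro q hq
  classical
  have hT : (0:ℝ) ≤ 1 / T := by positivity
  have hNR : (0:ℝ) < N := by exact_mod_cast Nat.lt_of_lt_of_le Nat.zero_lt_one hN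
  have hNne : (N:ℝ) ≠ 0 := ne_of_gt hNR
  have hB : 0 ≤ B :=
    le_trans (hbound 0 (by simp) q hq).1 (hbound 0 (by simp) q hq).2
  -- partition lemma
  have hpart : ∀ f : Fin T → ℝ,
      ∑ i ∈ Finset.range (N+1),
        ∑ t ∈ Finset.univ.filter (fun t => p t = (i:ℝ)/N), f t = ∑ t, f t := by
    intro f
    set g : Fin T → ℕ := fun t => (hp t).choose with hg
    have hg1 : ∀ t, g t ∈ Finset.range (N+1) := fun t => (hp t).choose_spec.1
    have hg2 : ∀ t, p t = (g t : ℝ)/N := fun t => (hp t).choose_spec.2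
    have h := Finset.sum_fiberwise_of_maps_to (s := Finset.univ) (g := g) (fun t _ => hg1 t) f
    rw [← h]
    refine Finset.sum_congr rfl fun i _ => ?_
    refine Finset.sum_congr ?_ fun _ _ => rfl
    ext t
    simp only [Finset.mem_filter, Finset.mem_univ, true_and]
    constructor
    · intro h'
      rw [hg2 t] at h'
      field_simp at h'
      exact_mod_cast h'
    · intro h'
      rw [hg2 t, h']
  -- per-bin inequality
  have hbin : ∀ i ∈ Finset.range (N+1),
      ∑ t ∈ Finset.univ.filter (fun t => p t = (i:ℝ)/N), ℓ (y t) (p t)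
        ≤ ∑ t ∈ Finset.univ.filter (fun t => p t = (i:ℝ)/N), ℓ (y t) q
          + 2 * B * |∑ t ∈ Finset.univ.filter (fun t => p t = (i:ℝ)/N),
              (y t - (i:ℝ)/N)| := by
    intro i hi
    set S := Finset.univ.filter (fun t => p t = (i:ℝ)/N) with hS
    set π : ℝ := (i:ℝ)/N with hπdef
    have hiN : (i:ℝ) ≤ N := by
      have : i ≤ N := Nat.lt_succ_iff.mp (Finset.mem_range.mp hi)
      exact_mod_cast this
    have hπ : π ∈ Set.Icc (0:ℝ) 1 := by
      constructor
      · positivity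
      · rw [hπdef, div_le_one hNR]; exact hiN
    set n : ℝ := (S.card : ℝ) with hn
    set k : ℝ := ∑ t ∈ S, y t with hk
    have hsum : ∀ r : ℝ, ∑ t ∈ S, ℓ (y t) r = k * ℓ 1 r + (n - k) * ℓ 0 r := by
      intro r
      have : ∀ t ∈ S, ℓ (y t) r = y t * ℓ 1 r + (1 - y t) * ℓ 0 r := by
        intro t _
        rcases hy t with h | h <;> rw [h] <;> ring
      rw [Finset.sum_congr rfl this, Finset.sum_add_distrib, ← Finset.sum_mul,
        ← Finset.sum_mul, Finset.sum_sub_distrib, Finset.sum_const, nsmul_eq_mul,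
        mul_one]
    have hpl : ∑ t ∈ S, ℓ (y t) (p t) = ∑ t ∈ S, ℓ (y t) π := by
      refine Finset.sum_congr rfl fun t ht => ?_
      have : p t = π := (Finset.mem_filter.mp ht).2
      rw [this]
    have hdev : ∑ t ∈ S, (y t - π) = k - n * π := by
      rw [Finset.sum_sub_distrib, Finset.sum_const, nsmul_eq_mul]
    rw [hpl, hsum π, hsum q, hdev]
    -- now pure real inequality
    have hn0 : 0 ≤ n := by positivity
    have hprop := hproper π hπ q hq
    have hpropn : n * (π * ℓ 1 π + (1 - π) * ℓ 0 π)
        ≤ n * (π * ℓ 1 q + (1 - π) * ℓ 0 q) := mul_le_mul_of_nonneg_left hprop hn0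
    set d : ℝ := k - n * π with hd
    have hb1π := hbound 1 (by simp) π hπ
    have hb0π := hbound 0 (by simp) π hπ
    have hb1q := hbound 1 (by simp) q hq
    have hb0q := hbound 0 (by simp) q hq
    have hX : |ℓ 1 π - ℓ 0 π - ℓ 1 q + ℓ 0 q| ≤ 2 * B := by
      rw [abs_le]
      constructor <;> [linarith [hb1π.1, hb0π.2, hb1q.2, hb0q.1];
        linarith [hb1π.2, hb0π.1, hb1q.1, hb0q.2]]
    have hdX : d * (ℓ 1 π - ℓ 0 π - ℓ 1 q + ℓ 0 q) ≤ 2 * B * |d| := by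
      calc d * (ℓ 1 π - ℓ 0 π - ℓ 1 q + ℓ 0 q)
          ≤ |d * (ℓ 1 π - ℓ 0 π - ℓ 1 q + ℓ 0 q)| := le_abs_self _
        _ = |d| * |ℓ 1 π - ℓ 0 π - ℓ 1 q + ℓ 0 q| := abs_mul _ _
        _ ≤ |d| * (2 * B) := mul_le_mul_of_nonneg_left hX (abs_nonneg d)
        _ = 2 * B * |d| := by ring
    nlinarith [hpropn, hdX]
  -- combine
  have htot : ∑ t, ℓ (y t) (p t)
      ≤ ∑ t, ℓ (y t) q + 2 * B * ∑ i ∈ Finset.range (N+1),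
          |∑ t ∈ Finset.univ.filter (fun t => p t = (i:ℝ)/N), (y t - (i:ℝ)/N)| := by
    rw [← hpart (fun t => ℓ (y t) (p t)), ← hpart (fun t => ℓ (y t) q),
      Finset.mul_sum, ← Finset.sum_add_distrib]
    exact Finset.sum_le_sum hbin
  have := mul_le_mul_of_nonneg_left htot hT
  calc (1 / (T:ℝ)) * ∑ t, ℓ (y t) (p t)
      ≤ (1 / (T:ℝ)) * (∑ t, ℓ (y t) q + 2 * B * ∑ i ∈ Finset.range (N+1),
          |∑ t ∈ Finset.univ.filter (fun t => p t = (i:ℝ)/N), (y t - (i:ℝ)/N)|) := this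
    _ = (1 / (T:ℝ)) * ∑ t, ℓ (y t) q + 2 * B * calErrL1 T N p y := by
        rw [calErrL1]; ring
end

section
/- Let N ≥ 1, let r ≥ 1 be a real number, and let y_1,…,y_T ∈ {0,1} be outcomes with forecasts p_1,…,p_T taking values in the grid G_N = {i/N : i = 0,…,N}. Suppose the index set {1,…,T} is partitioned into M nonempty groups S_1,…,S_M with |S_j| = T_j. For a set S of times, let n_i(S) = #{t ∈ S : p_t = i/N}, ρ_i(S) = (Σ_{t ∈ S : p_t = i/N} y_t)/n_i(S) when n_i(S) > 0, and let the ℓr calibration error over S be C^r(S) = Σ_{i : n_i(S) > 0} |ρ_i(S) − i/N|^r · (n_i(S)/|S|). Then C^r({1,…,T}) ≤ Σ_{j=1}^M (T_j/T) · C^r(S_j). -/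
open scoped BigOperators Classical

/-- `n_i(S)`: the number of times `t ∈ S` at which `i/N` was forecast. -/
noncomputable def nOn (T N : ℕ) (p : Fin T → ℝ) (S : Finset (Fin T)) (i : ℕ) : ℕ :=
  (S.filter (fun t => p t = (i : ℝ) / N)).card

/-- `ρ_i(S)`: the empirical frequency of outcome 1 over the times `t ∈ S`
at which `i/N` was forecast. -/
noncomputable def rhoOn (T N : ℕ) (p y : Fin T → ℝ) (S : Finset (Fin T)) (i : ℕ) : ℝ :=
  (∑ t ∈ S.filter (fun t => p t = (i : ℝ) / N), y t) / (nOn T N p S i : ℝ)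

/-- The ℓr calibration error over `S`:
`C^r(S) = ∑_{i : n_i(S) > 0} |ρ_i(S) − i/N|^r · (n_i(S)/|S|)` (real exponent `r`). -/
noncomputable def calErrROn (T N : ℕ) (r : ℝ) (p y : Fin T → ℝ) (S : Finset (Fin T)) : ℝ :=
  ∑ i ∈ (Finset.range (N + 1)).filter (fun i => 0 < nOn T N p S i),
    |rhoOn T N p y S i - (i : ℝ) / N| ^ r * ((nOn T N p S i : ℝ) / (S.card : ℝ))

lemma convexOn_abs_rpow {r : ℝ} (hr : 1 ≤ r) :
    ConvexOn ℝ Set.univ (fun x : ℝ => |x| ^ r) := by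
  have himg : abs '' (Set.univ : Set ℝ) = Set.Ici 0 := by
    ext x
    constructor
    · rintro ⟨y, -, rfl⟩; exact abs_nonneg y
    · intro hx; exact ⟨x, trivial, abs_of_nonneg hx⟩
  have habs : ConvexOn ℝ (Set.univ : Set ℝ) abs := by
    exact convexOn_univ_norm (E := ℝ)
  have hg : ConvexOn ℝ (abs '' Set.univ) (fun t : ℝ => t ^ r) := by
    rw [himg]; exact convexOn_rpow hr
  have hmono : MonotoneOn (fun t : ℝ => t ^ r) (abs '' Set.univ) := by
    rw [himg]
    intro a ha b _ hab
    exact Real.rpow_le_rpow ha hab (le_trans zero_le_one hr)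
  exact hg.comp habs hmono

lemma jensen_div {M : ℕ} (n : Fin M → ℕ) (Y : Fin M → ℝ) (c r : ℝ) (hr : 1 ≤ r)
    (hY0 : ∀ j, n j = 0 → Y j = 0) (hn : 0 < ∑ j, n j) :
    |(∑ j, Y j) / ((∑ j, n j : ℕ) : ℝ) - c| ^ r * ((∑ j, n j : ℕ) : ℝ)
      ≤ ∑ j, |Y j / (n j : ℝ) - c| ^ r * (n j : ℝ) := by
  set nt : ℝ := ((∑ j, n j : ℕ) : ℝ) with hntdef
  have hnt : (0 : ℝ) < nt := by rw [hntdef]; exact_mod_cast hn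
  set w : Fin M → ℝ := fun j => (n j : ℝ) / nt with hwdef
  set pt : Fin M → ℝ := fun j => Y j / (n j : ℝ) - c with hptdef
  have h₀ : ∀ j ∈ Finset.univ, 0 ≤ w j := fun j _ => by positivity
  have h₁ : ∑ j, w j = 1 := by
    rw [hwdef]
    rw [← Finset.sum_div]
    rw [show (∑ j, (n j : ℝ)) = nt by rw [hntdef]; push_cast; ring]
    exact div_self hnt.ne'
  have hsum : ∑ j, w j • pt j = (∑ j, Y j) / nt - c := by
    have hterm : ∀ j, w j • pt j = (Y j - (n j : ℝ) * c) / nt := by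
      intro j
      by_cases h : n j = 0
      · simp [hwdef, hptdef, h, hY0 j h]
      · have : (n j : ℝ) ≠ 0 := Nat.cast_ne_zero.mpr h
        simp only [hwdef, hptdef, smul_eq_mul]
        field_simp
    rw [Finset.sum_congr rfl (fun j _ => hterm j), ← Finset.sum_div]
    rw [Finset.sum_sub_distrib]
    rw [← Finset.sum_mul]
    rw [show (∑ j, (n j : ℝ)) = nt by rw [hntdef]; push_cast; ring]
    field_simp
  have hj := (convexOn_abs_rpow hr).map_sum_le h₀ h₁ (fun j _ => Set.mem_univ (pt j))
  rw [hsum] at hj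
  calc |(∑ j, Y j) / nt - c| ^ r * nt ≤ (∑ j, w j • |pt j| ^ r) * nt := by
        apply mul_le_mul_of_nonneg_right hj hnt.le
    _ = ∑ j, |pt j| ^ r * (n j : ℝ) := by
        rw [Finset.sum_mul]
        refine Finset.sum_congr rfl fun j _ => ?_
        simp only [hwdef, smul_eq_mul]
        field_simp

/-- For any real `r ≥ 1`, if the times `{1,…,T}` are partitioned into `M`
nonempty groups `S_1,…,S_M`, the ℓr calibration error of the full sequence is at most
the weighted average `∑_j (T_j/T)·C^r(S_j)` of the per-group ℓr calibration errors. -/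
theorem stmt5 (T N M : ℕ) (hN : 1 ≤ N) (r : ℝ) (hr : 1 ≤ r) (y p : Fin T → ℝ)
    (hy : ∀ t, y t = 0 ∨ y t = 1)
    (hp : ∀ t, ∃ i ∈ Finset.range (N + 1), p t = (i : ℝ) / N)
    (S : Fin M → Finset (Fin T))
    (hne : ∀ j, (S j).Nonempty)
    (hdisj : ∀ j k, j ≠ k → Disjoint (S j) (S k))
    (hcover : ∀ t, ∃ j, t ∈ S j) :
    calErrROn T N r p y Finset.univ
      ≤ ∑ j, (((S j).card : ℝ) / (T : ℝ)) * calErrROn T N r p y (S j) := by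
  rcases Nat.eq_zero_or_pos T with hT | hT
  · subst hT
    haveI : IsEmpty (Fin M) := ⟨fun j => (hne j).choose.elim0⟩
    simp [calErrROn, nOn]
  have hT' : (0 : ℝ) < T := by exact_mod_cast hT
  -- partition facts
  have huniv : (Finset.univ : Finset (Fin T)) = Finset.univ.biUnion S := by
    ext t; simpa using hcover t
  have hfun : ∀ (i : ℕ) (f : Fin T → ℝ),
      (∑ t ∈ Finset.univ.filter (fun t => p t = (i : ℝ) / N), f t)
        = ∑ j, ∑ t ∈ (S j).filter (fun t => p t = (i : ℝ) / N), f t := by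
    intro i f
    rw [huniv, Finset.filter_biUnion, Finset.sum_biUnion]
    intro j _ k _ hjk
    exact (hdisj j k hjk).mono (Finset.filter_subset _ _) (Finset.filter_subset _ _)
  have hcard : ∀ i, (nOn T N p Finset.univ i : ℝ) = ∑ j, (nOn T N p (S j) i : ℝ) := by
    intro i
    have := hfun i (fun _ => (1 : ℝ))
    simpa [nOn, Finset.sum_const] using this
  have hext : ∀ s : Finset (Fin T), calErrROn T N r p y s
      = ∑ i ∈ Finset.range (N + 1),
          |rhoOn T N p y s i - (i : ℝ) / N| ^ r * ((nOn T N p s i : ℝ) / (s.card : ℝ)) := by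
    intro s
    unfold calErrROn
    apply Finset.sum_subset (Finset.filter_subset _ _)
    intro i hi hni
    have h0 : nOn T N p s i = 0 := by
      by_contra h
      exact hni (Finset.mem_filter.mpr ⟨hi, Nat.pos_of_ne_zero h⟩)
    simp [h0]
  -- rewrite RHS
  have hRHS : ∑ j, (((S j).card : ℝ) / (T : ℝ)) * calErrROn T N r p y (S j)
      = ∑ i ∈ Finset.range (N + 1), ∑ j,
          |rhoOn T N p y (S j) i - (i : ℝ) / N| ^ r * ((nOn T N p (S j) i : ℝ) / (T : ℝ)) := by
    rw [Finset.sum_comm]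
    refine Finset.sum_congr rfl fun j _ => ?_
    have hTj : (0 : ℝ) < ((S j).card : ℝ) := by exact_mod_cast Finset.card_pos.mpr (hne j)
    rw [hext, Finset.mul_sum]
    refine Finset.sum_congr rfl fun i _ => ?_
    field_simp
  rw [hRHS, hext]
  have hterm_nonneg : ∀ (i : ℕ) (j : Fin M),
      0 ≤ |rhoOn T N p y (S j) i - (i : ℝ) / N| ^ r * ((nOn T N p (S j) i : ℝ) / (T : ℝ)) := by
    intro i j
    apply mul_nonneg (Real.rpow_nonneg (abs_nonneg _) r)
    positivity
  refine Finset.sum_le_sum fun i hi => ?_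
  by_cases hipos : 0 < nOn T N p Finset.univ i
  swap
  · have h0 : nOn T N p Finset.univ i = 0 := Nat.eq_zero_of_not_pos hipos
    rw [h0]
    simp only [Nat.cast_zero, zero_div, mul_zero]
    exact Finset.sum_nonneg fun j _ => hterm_nonneg i j
  have hncast : nOn T N p Finset.univ i = ∑ j, nOn T N p (S j) i := by
    exact_mod_cast hcard i
  have hY0 : ∀ j, nOn T N p (S j) i = 0 →
      (∑ t ∈ (S j).filter (fun t => p t = (i : ℝ) / N), y t) = 0 := by
    intro j h
    have h' : (S j).filter (fun t => p t = (i : ℝ) / N) = ∅ := Finset.card_eq_zero.mp h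
    rw [h', Finset.sum_empty]
  have hn : 0 < ∑ j, nOn T N p (S j) i := hncast ▸ hipos
  have key := jensen_div (fun j => nOn T N p (S j) i)
    (fun j => ∑ t ∈ (S j).filter (fun t => p t = (i : ℝ) / N), y t)
    ((i : ℝ) / N) r hr hY0 hn
  have hrho : rhoOn T N p y Finset.univ i
      = (∑ j, ∑ t ∈ (S j).filter (fun t => p t = (i : ℝ) / N), y t)
        / ((∑ j, nOn T N p (S j) i : ℕ) : ℝ) := by
    unfold rhoOn
    rw [hfun i y, hncast]
  have hcardT : (((Finset.univ : Finset (Fin T)).card : ℕ) : ℝ) = (T : ℝ) := by simp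
  rw [hrho, hncast, hcardT]
  calc |(∑ j, ∑ t ∈ (S j).filter (fun t => p t = (i : ℝ) / N), y t)
          / ((∑ j, nOn T N p (S j) i : ℕ) : ℝ) - (i : ℝ) / N| ^ r
        * (((∑ j, nOn T N p (S j) i : ℕ) : ℝ) / (T : ℝ))
      = (|(∑ j, ∑ t ∈ (S j).filter (fun t => p t = (i : ℝ) / N), y t)
          / ((∑ j, nOn T N p (S j) i : ℕ) : ℝ) - (i : ℝ) / N| ^ r
        * ((∑ j, nOn T N p (S j) i : ℕ) : ℝ)) / (T : ℝ) := by ring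
    _ ≤ (∑ j, |(∑ t ∈ (S j).filter (fun t => p t = (i : ℝ) / N), y t)
          / ((nOn T N p (S j) i : ℕ) : ℝ) - (i : ℝ) / N| ^ r
          * ((nOn T N p (S j) i : ℕ) : ℝ)) / (T : ℝ) := by gcongr
    _ = ∑ j, |rhoOn T N p y (S j) i - (i : ℝ) / N| ^ r
          * ((nOn T N p (S j) i : ℝ) / (T : ℝ)) := by
        rw [Finset.sum_div]
        refine Finset.sum_congr rfl fun j _ => ?_
        unfold rhoOn
        ring
end

section
/- Let ℓ : {0,1} × [0,1] → ℝ be a proper loss bounded by B and let N ≥ 1. Suppose ℓ satisfies: for all y ∈ {0,1}, all j ∈ {0,…,N−1}, and all p ∈ [j/N, (j+1)/N): |ℓ(y, p) − ℓ(y, j/N)| ≤ B/N. Let y_1,…,y_T ∈ {0,1} be outcomes, let p^F_1,…,p^F_T ∈ [0,1) be raw forecasts, and partition {1,…,T} into groups S_0,…,S_{N−1} where S_j = {t : p^F_t ∈ [j/N, (j+1)/N)}, with T_j = |S_j|. Let p_1,…,p_T be recalibrated forecasts taking values in the grid G_N = {i/N : i = 0,…,N}, and suppose for each nonempty S_j the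 ℓ1 calibration error of the pairs {(p_t, y_t) : t ∈ S_j} (normalized by 1/T_j) is at most ε_j. Then (1/T) Σ_{t=1}^T ℓ(y_t, p_t) − (1/T) Σ_{t=1}^T ℓ(y_t, p^F_t) ≤ B/N + 2·B·Σ_{j : T_j > 0} (T_j/T)·ε_j. -/
open scoped BigOperators Classical

/-- The ℓ1 calibration error over a set `S` of times, normalized by `|S|`:
`(1/|S|) · ∑_{i=0}^N |∑_{t ∈ S : p_t = i/N} (y_t − i/N)|`. -/
noncomputable def calErrL1On (T N : ℕ) (p y : Fin T → ℝ) (S : Finset (Fin T)) : ℝ :=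
  (1 / (S.card : ℝ)) * ∑ i ∈ Finset.range (N + 1),
    |∑ t ∈ S.filter (fun t => p t = (i : ℝ) / N), (y t - (i : ℝ) / N)|

/-- The bucket `S_j = {t : p^F_t ∈ [j/N, (j+1)/N)}` of times whose raw forecast
falls in the `j`-th grid interval. -/
noncomputable def bucket (T N : ℕ) (pF : Fin T → ℝ) (j : ℕ) : Finset (Fin T) :=
  Finset.univ.filter (fun t => pF t ∈ Set.Ico ((j : ℝ) / N) (((j : ℝ) + 1) / N))

lemma loss_sum_eq {T : ℕ} (y : Fin T → ℝ) (hy : ∀ t, y t = 0 ∨ y t = 1)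
    (ℓ : ℝ → ℝ → ℝ) (q : ℝ) (A : Finset (Fin T)) :
    ∑ t ∈ A, ℓ (y t) q
      = (∑ t ∈ A, y t) * ℓ 1 q + ((A.card : ℝ) - ∑ t ∈ A, y t) * ℓ 0 q := by
  have h : ∀ t ∈ A, ℓ (y t) q = y t * ℓ 1 q + (1 - y t) * ℓ 0 q := by
    intro t _
    rcases hy t with h | h <;> rw [h] <;> ring_nf
  rw [Finset.sum_congr rfl h, Finset.sum_add_distrib, ← Finset.sum_mul, ← Finset.sum_mul,
    Finset.sum_sub_distrib, Finset.sum_const, nsmul_eq_mul, mul_one]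

lemma fiber_bound {T : ℕ} (y : Fin T → ℝ) (hy : ∀ t, y t = 0 ∨ y t = 1)
    (ℓ : ℝ → ℝ → ℝ) (B a b : ℝ)
    (hP : a * ℓ 1 a + (1 - a) * ℓ 0 a ≤ a * ℓ 1 b + (1 - a) * ℓ 0 b)
    (h1a : 0 ≤ ℓ 1 a) (h1a' : ℓ 1 a ≤ B) (h0a : 0 ≤ ℓ 0 a) (h0a' : ℓ 0 a ≤ B)
    (h1b : 0 ≤ ℓ 1 b) (h1b' : ℓ 1 b ≤ B) (h0b : 0 ≤ ℓ 0 b) (h0b' : ℓ 0 b ≤ B)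
    (A : Finset (Fin T)) :
    ∑ t ∈ A, ℓ (y t) a ≤ ∑ t ∈ A, ℓ (y t) b + 2 * B * |∑ t ∈ A, (y t - a)| := by
  have hd : ∑ t ∈ A, (y t - a) = (∑ t ∈ A, y t) - (A.card : ℝ) * a := by
    rw [Finset.sum_sub_distrib, Finset.sum_const, nsmul_eq_mul]
  set s : ℝ := ∑ t ∈ A, y t with hs
  set n : ℝ := (A.card : ℝ) with hn
  have hn0 : (0:ℝ) ≤ n := by positivity
  have habsDa : |ℓ 1 a - ℓ 0 a| ≤ B := abs_le.mpr ⟨by linarith, by linarith⟩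
  have habsDb : |ℓ 1 b - ℓ 0 b| ≤ B := abs_le.mpr ⟨by linarith, by linarith⟩
  have h1 : (s - n * a) * (ℓ 1 a - ℓ 0 a) ≤ |s - n * a| * B := by
    calc (s - n * a) * (ℓ 1 a - ℓ 0 a) ≤ |(s - n * a) * (ℓ 1 a - ℓ 0 a)| := le_abs_self _
      _ = |s - n * a| * |ℓ 1 a - ℓ 0 a| := abs_mul _ _
      _ ≤ |s - n * a| * B := mul_le_mul_of_nonneg_left habsDa (abs_nonneg _)
  have h2 : -((s - n * a) * (ℓ 1 b - ℓ 0 b)) ≤ |s - n * a| * B := by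
    calc -((s - n * a) * (ℓ 1 b - ℓ 0 b)) ≤ |(s - n * a) * (ℓ 1 b - ℓ 0 b)| := neg_le_abs _
      _ = |s - n * a| * |ℓ 1 b - ℓ 0 b| := abs_mul _ _
      _ ≤ |s - n * a| * B := mul_le_mul_of_nonneg_left habsDb (abs_nonneg _)
  have hPn : n * (a * ℓ 1 a + (1 - a) * ℓ 0 a) ≤ n * (a * ℓ 1 b + (1 - a) * ℓ 0 b) :=
    mul_le_mul_of_nonneg_left hP hn0
  rw [loss_sum_eq y hy ℓ a A, loss_sum_eq y hy ℓ b A, hd]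
  rw [← hs, ← hn]
  nlinarith [h1, h2, hPn]

/-- Lemma 2, recalibration preserves accuracy: if `ℓ` is a proper loss
bounded by `B` varying by at most `B/N` on each grid interval, raw forecasts
`p^F_t ∈ [0,1)` are bucketed into `S_j = {t : p^F_t ∈ [j/N,(j+1)/N)}`, and on each
nonempty bucket the recalibrated grid-valued forecasts have ℓ1 calibration error at
most `ε_j`, then the average loss of the recalibrated forecasts exceeds that of the
raw forecasts by at most `B/N + 2·B·∑_{j : T_j > 0} (T_j/T)·ε_j`. -/
theorem stmt6 (T N : ℕ) (hN : 1 ≤ N) (y : Fin T → ℝ)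
    (hy : ∀ t, y t = 0 ∨ y t = 1)
    (pF : Fin T → ℝ) (hpF : ∀ t, pF t ∈ Set.Ico (0:ℝ) 1)
    (p : Fin T → ℝ) (hp : ∀ t, ∃ i ∈ Finset.range (N + 1), p t = (i : ℝ) / N)
    (ℓ : ℝ → ℝ → ℝ) (B : ℝ)
    (hproper : ∀ p' ∈ Set.Icc (0:ℝ) 1, ∀ q ∈ Set.Icc (0:ℝ) 1,
      p' * ℓ 1 p' + (1 - p') * ℓ 0 p' ≤ p' * ℓ 1 q + (1 - p') * ℓ 0 q)
    (hbound : ∀ y' ∈ ({0, 1} : Set ℝ), ∀ q ∈ Set.Icc (0:ℝ) 1,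
      0 ≤ ℓ y' q ∧ ℓ y' q ≤ B)
    (hlip : ∀ y' ∈ ({0, 1} : Set ℝ), ∀ j ∈ Finset.range N,
      ∀ q ∈ Set.Ico ((j : ℝ) / N) (((j : ℝ) + 1) / N),
        |ℓ y' q - ℓ y' ((j : ℝ) / N)| ≤ B / N)
    (ε : ℕ → ℝ)
    (hε : ∀ j ∈ Finset.range N, (bucket T N pF j).Nonempty →
      calErrL1On T N p y (bucket T N pF j) ≤ ε j) :
    (1 / (T : ℝ)) * ∑ t, ℓ (y t) (p t) - (1 / (T : ℝ)) * ∑ t, ℓ (y t) (pF t)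
      ≤ B / N + 2 * B *
          ∑ j ∈ (Finset.range N).filter (fun j => 0 < (bucket T N pF j).card),
            (((bucket T N pF j).card : ℝ) / (T : ℝ)) * ε j := by
  classical
  have hN0 : (0:ℝ) < N := by exact_mod_cast Nat.lt_of_lt_of_le Nat.zero_lt_one hN
  have hB : 0 ≤ B := by
    have h := hbound 0 (by simp) 0 (by constructor <;> norm_num)
    linarith [h.1, h.2]
  -- T = 0 case
  rcases Nat.eq_zero_or_pos T with hT0 | hTpos
  · subst hT0
    have hfe : (Finset.range N).filter (fun j => 0 < (bucket 0 N pF j).card) = ∅ := by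
      apply Finset.filter_false_of_mem
      intro j _
      simp only [not_lt, Nat.le_zero]
      have : (bucket 0 N pF j) ⊆ Finset.univ := Finset.subset_univ _
      have := Finset.card_le_card this
      simpa using this
    rw [hfe]
    simp only [Finset.sum_empty, mul_zero, add_zero, Finset.univ_eq_empty, Finset.sum_empty,
      mul_zero, sub_zero]
    positivity
  have hT0 : (0:ℝ) < T := by exact_mod_cast hTpos
  -- bucket index
  have hJmem : ∀ t, ⌊pF t * N⌋₊ ∈ Finset.range N := by
    intro t
    have h0 : 0 ≤ pF t := (hpF t).1
    have h1 : pF t < 1 := (hpF t).2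
    have hlt : pF t * N < N := by nlinarith
    simp only [Finset.mem_range]
    exact (Nat.floor_lt (by positivity)).mpr hlt
  have hbucket : ∀ j : ℕ, bucket T N pF j = Finset.univ.filter (fun t => ⌊pF t * N⌋₊ = j) := by
    intro j
    ext t
    simp only [bucket, Finset.mem_filter, Finset.mem_univ, true_and, Set.mem_Ico]
    have h0 : 0 ≤ pF t := (hpF t).1
    have hnn : 0 ≤ pF t * N := by positivity
    rw [Nat.floor_eq_iff hnn]
    constructor
    · rintro ⟨ha, hb⟩
      rw [div_le_iff₀ hN0] at ha
      rw [lt_div_iff₀ hN0] at hb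
      exact ⟨ha, by linarith⟩
    · rintro ⟨ha, hb⟩
      rw [div_le_iff₀ hN0, lt_div_iff₀ hN0]
      exact ⟨ha, by linarith⟩
  -- partition of all times into buckets
  have hpart : ∀ f : Fin T → ℝ,
      ∑ t, f t = ∑ j ∈ Finset.range N, ∑ t ∈ bucket T N pF j, f t := by
    intro f
    rw [← Finset.sum_fiberwise_of_maps_to (fun t _ => hJmem t) f]
    exact Finset.sum_congr rfl (fun j _ => by rw [hbucket j])
  -- grid index of recalibrated forecasts
  choose I hImem hIval using hp
  -- per-bucket bound
  have hbucketsum : ∀ j ∈ Finset.range N,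
      ∑ t ∈ bucket T N pF j, ℓ (y t) (p t)
        ≤ ∑ t ∈ bucket T N pF j, ℓ (y t) ((j:ℝ)/N)
          + 2 * B * ∑ i ∈ Finset.range (N+1),
              |∑ t ∈ (bucket T N pF j).filter (fun t => p t = (i:ℝ)/N), (y t - (i:ℝ)/N)| := by
    intro j hj
    set S := bucket T N pF j with hS
    have hjN : (j:ℝ)/N ∈ Set.Icc (0:ℝ) 1 := by
      have : (j:ℝ) < N := by exact_mod_cast Finset.mem_range.mp hj
      constructor
      · positivity
      · rw [div_le_one hN0]; linarith
    have hmaps : ∀ t ∈ S, I t ∈ Finset.range (N+1) := fun t _ => hImem t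
    have hfib : ∀ f : Fin T → ℝ, ∑ t ∈ S, f t
        = ∑ i ∈ Finset.range (N+1), ∑ t ∈ S.filter (fun t => I t = i), f t :=
      fun f => (Finset.sum_fiberwise_of_maps_to hmaps f).symm
    have hfilter : ∀ i ∈ Finset.range (N+1),
        S.filter (fun t => p t = (i:ℝ)/N) = S.filter (fun t => I t = i) := by
      intro i _
      apply Finset.filter_congr
      intro t _
      constructor
      · intro h
        have h2 : ((I t : ℝ)) / N = (i:ℝ)/N := by rw [← hIval t, h]
        field_simp at h2
        exact_mod_cast h2
      · intro h; rw [hIval t, h]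
    rw [hfib (fun t => ℓ (y t) (p t)), hfib (fun t => ℓ (y t) ((j:ℝ)/N)), Finset.mul_sum,
      ← Finset.sum_add_distrib]
    apply Finset.sum_le_sum
    intro i hi
    rw [hfilter i hi]
    have hiN : (i:ℝ)/N ∈ Set.Icc (0:ℝ) 1 := by
      have : (i:ℝ) ≤ N := by exact_mod_cast Nat.lt_succ_iff.mp (Finset.mem_range.mp hi)
      constructor
      · positivity
      · rw [div_le_one hN0]; linarith
    have hpt : ∑ t ∈ S.filter (fun t => I t = i), ℓ (y t) (p t)
        = ∑ t ∈ S.filter (fun t => I t = i), ℓ (y t) ((i:ℝ)/N) := by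
      apply Finset.sum_congr rfl
      intro t ht
      rw [hIval t, (Finset.mem_filter.mp ht).2]
    rw [hpt]
    have hb1a := hbound 1 (by simp) ((i:ℝ)/N) hiN
    have hb0a := hbound 0 (by simp) ((i:ℝ)/N) hiN
    have hb1b := hbound 1 (by simp) ((j:ℝ)/N) hjN
    have hb0b := hbound 0 (by simp) ((j:ℝ)/N) hjN
    exact fiber_bound y hy ℓ B ((i:ℝ)/N) ((j:ℝ)/N)
      (hproper ((i:ℝ)/N) hiN ((j:ℝ)/N) hjN)
      hb1a.1 hb1a.2 hb0a.1 hb0a.2 hb1b.1 hb1b.2 hb0b.1 hb0b.2 _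
  -- Lipschitz bound on buckets
  have hlipsum : ∀ j ∈ Finset.range N, ∀ t ∈ bucket T N pF j,
      ℓ (y t) ((j:ℝ)/N) ≤ ℓ (y t) (pF t) + B/N := by
    intro j hj t ht
    have hyt : y t ∈ ({0,1} : Set ℝ) := by rcases hy t with h | h <;> rw [h] <;> simp
    have hq : pF t ∈ Set.Ico ((j:ℝ)/N) (((j:ℝ)+1)/N) := by
      simp only [bucket, Finset.mem_filter] at ht
      exact ht.2
    have h := abs_le.mp (hlip (y t) hyt j hj (pF t) hq)
    linarith [h.1]
  -- abbreviations
  set C : ℕ → ℝ := fun j => ∑ i ∈ Finset.range (N+1),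
    |∑ t ∈ (bucket T N pF j).filter (fun t => p t = (i:ℝ)/N), (y t - (i:ℝ)/N)| with hC
  set E : ℝ := ∑ j ∈ (Finset.range N).filter (fun j => 0 < (bucket T N pF j).card),
    ((bucket T N pF j).card : ℝ) * ε j with hE
  -- total count
  have hcard : (T:ℝ) = ∑ j ∈ Finset.range N, ((bucket T N pF j).card : ℝ) := by
    have h := hpart (fun _ => (1:ℝ))
    simpa [Finset.sum_const, nsmul_eq_mul] using h
  -- calibration sums bound
  have hCE : ∑ j ∈ Finset.range N, C j ≤ E := by
    rw [← Finset.sum_filter_add_sum_filter_not (Finset.range N)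
      (fun j => 0 < (bucket T N pF j).card) C]
    have hz : ∑ j ∈ (Finset.range N).filter
        (fun j => ¬ 0 < (bucket T N pF j).card), C j = 0 := by
      apply Finset.sum_eq_zero
      intro j hj
      have hj2 := (Finset.mem_filter.mp hj).2
      have hempty : bucket T N pF j = ∅ := by
        rw [← Finset.card_eq_zero]
        omega
      simp [hC, hempty]
    rw [hz, add_zero, hE]
    apply Finset.sum_le_sum
    intro j hj
    have hj1 := (Finset.mem_filter.mp hj).1
    have hj2 := (Finset.mem_filter.mp hj).2
    have hne : (bucket T N pF j).Nonempty := Finset.card_pos.mp hj2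
    have hcal := hε j hj1 hne
    have hcpos : (0:ℝ) < ((bucket T N pF j).card : ℝ) := by exact_mod_cast hj2
    rw [calErrL1On] at hcal
    have : (1 / ((bucket T N pF j).card : ℝ)) * C j ≤ ε j := hcal
    calc C j = ((bucket T N pF j).card : ℝ) * ((1 / ((bucket T N pF j).card : ℝ)) * C j) := by
          field_simp
      _ ≤ ((bucket T N pF j).card : ℝ) * ε j :=
          mul_le_mul_of_nonneg_left this (le_of_lt hcpos)
  -- main unnormalized bound
  have hmain : ∑ t, ℓ (y t) (p t) ≤ ∑ t, ℓ (y t) (pF t) + (T:ℝ) * (B/N) + 2*B*E := by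
    calc ∑ t, ℓ (y t) (p t)
        = ∑ j ∈ Finset.range N, ∑ t ∈ bucket T N pF j, ℓ (y t) (p t) := hpart _
      _ ≤ ∑ j ∈ Finset.range N,
            (∑ t ∈ bucket T N pF j, ℓ (y t) ((j:ℝ)/N) + 2*B*C j) :=
          Finset.sum_le_sum (fun j hj => hbucketsum j hj)
      _ = ∑ j ∈ Finset.range N, ∑ t ∈ bucket T N pF j, ℓ (y t) ((j:ℝ)/N)
            + 2*B * ∑ j ∈ Finset.range N, C j := by
          rw [Finset.sum_add_distrib, Finset.mul_sum]
      _ ≤ ∑ j ∈ Finset.range N,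
            (∑ t ∈ bucket T N pF j, ℓ (y t) (pF t)
              + ((bucket T N pF j).card : ℝ) * (B/N))
            + 2*B * ∑ j ∈ Finset.range N, C j := by
          apply add_le_add_left
          apply Finset.sum_le_sum
          intro j hj
          calc ∑ t ∈ bucket T N pF j, ℓ (y t) ((j:ℝ)/N)
              ≤ ∑ t ∈ bucket T N pF j, (ℓ (y t) (pF t) + B/N) :=
                Finset.sum_le_sum (fun t ht => hlipsum j hj t ht)
            _ = ∑ t ∈ bucket T N pF j, ℓ (y t) (pF t)
                  + ((bucket T N pF j).card : ℝ) * (B/N) := by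
                rw [Finset.sum_add_distrib, Finset.sum_const, nsmul_eq_mul]
      _ = ∑ t, ℓ (y t) (pF t) + (T:ℝ) * (B/N) + 2*B * ∑ j ∈ Finset.range N, C j := by
          rw [Finset.sum_add_distrib, ← Finset.sum_mul, ← hcard, ← hpart]
      _ ≤ ∑ t, ℓ (y t) (pF t) + (T:ℝ) * (B/N) + 2*B*E := by
          have h2B : (0:ℝ) ≤ 2*B := by linarith
          nlinarith [mul_le_mul_of_nonneg_left hCE h2B]
  -- normalize
  have hsum : ∑ j ∈ (Finset.range N).filter (fun j => 0 < (bucket T N pF j).card),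
      (((bucket T N pF j).card : ℝ) / (T : ℝ)) * ε j = E / T := by
    rw [hE, Finset.sum_div]
    apply Finset.sum_congr rfl
    intro j _
    ring
  rw [hsum]
  have hmul := mul_le_mul_of_nonneg_left hmain
    (le_of_lt (by positivity : (0:ℝ) < 1/(T:ℝ)))
  have heq : (1/(T:ℝ)) * (∑ t, ℓ (y t) (pF t) + (T:ℝ)*(B/N) + 2*B*E)
      = (1/(T:ℝ)) * (∑ t, ℓ (y t) (pF t)) + B/N + 2*B*(E/(T:ℝ)) := by
    field_simp
  linarith [hmul, heq]
end

section
/- Let ℓ : {0,1} × [0,1] → ℝ be a proper loss bounded by B > 0, let ε > 0, and let N be an integer with N ≥ 3B/ε. Suppose ℓ satisfies: for all y ∈ {0,1}, all j ∈ {0,…,N−1}, and all p ∈ [j/N, (j+1)/N): |ℓ(y, p) − ℓ(y, j/N)| ≤ B/N. Let y_1,…,y_T ∈ {0,1} be outcomes, let p^F_1,…,p^F_T ∈ [0,1) be raw forecasts, and partition {1,…,T} into groups S_j = {t : p^F_t ∈ [j/N, (j+1)/N)} for j = 0,…,N−1. Let p_1,…,p_T be recalibrated forecasts taking values in the grid G_N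 = {i/N : i = 0,…,N}, and suppose for each nonempty S_j the ℓ1 calibration error of {(p_t, y_t) : t ∈ S_j} is at most ε/(3B). Then: (a) the ℓ1 calibration error of the full sequence (p_t, y_t)_{t=1}^T is at most ε/(3B), and (b) (1/T) Σ_{t=1}^T ℓ(y_t, p_t) − (1/T) Σ_{t=1}^T ℓ(y_t, p^F_t) ≤ ε. -/
open scoped BigOperators Classical

private lemma cell_ineq (B : ℝ) (ℓ : ℝ → ℝ → ℝ)
    (hproper : ∀ p' ∈ Set.Icc (0:ℝ) 1, ∀ q ∈ Set.Icc (0:ℝ) 1,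
      p' * ℓ 1 p' + (1 - p') * ℓ 0 p' ≤ p' * ℓ 1 q + (1 - p') * ℓ 0 q)
    (hbound : ∀ y' ∈ ({0, 1} : Set ℝ), ∀ q ∈ Set.Icc (0:ℝ) 1, 0 ≤ ℓ y' q ∧ ℓ y' q ≤ B)
    (v q : ℝ) (hv : v ∈ Set.Icc (0:ℝ) 1) (hq : q ∈ Set.Icc (0:ℝ) 1)
    (n sY : ℝ) (hn : 0 ≤ n) :
    sY * ℓ 1 v + (n - sY) * ℓ 0 v ≤
      sY * ℓ 1 q + (n - sY) * ℓ 0 q + 2 * B * |sY - n * v| := by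
  have h1 := hproper v hv q hq
  have h2 : n * (v * ℓ 1 v + (1 - v) * ℓ 0 v) ≤ n * (v * ℓ 1 q + (1 - v) * ℓ 0 q) :=
    mul_le_mul_of_nonneg_left h1 hn
  have hb1v := hbound 1 (by simp) v hv
  have hb0v := hbound 0 (by simp) v hv
  have hb1q := hbound 1 (by simp) q hq
  have hb0q := hbound 0 (by simp) q hq
  set d := sY - n * v with hd
  have habsv : |ℓ 1 v - ℓ 0 v| ≤ B :=
    abs_le.mpr ⟨by linarith [hb1v.1, hb0v.2], by linarith [hb1v.2, hb0v.1]⟩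
  have habsq : |ℓ 1 q - ℓ 0 q| ≤ B :=
    abs_le.mpr ⟨by linarith [hb1q.1, hb0q.2], by linarith [hb1q.2, hb0q.1]⟩
  have h3 : d * (ℓ 1 v - ℓ 0 v) ≤ |d| * B := by
    calc d * (ℓ 1 v - ℓ 0 v) ≤ |d * (ℓ 1 v - ℓ 0 v)| := le_abs_self _
    _ = |d| * |ℓ 1 v - ℓ 0 v| := abs_mul _ _
    _ ≤ |d| * B := mul_le_mul_of_nonneg_left habsv (abs_nonneg _)
  have h4 : -(|d| * B) ≤ d * (ℓ 1 q - ℓ 0 q) := by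
    have h5 : -(d * (ℓ 1 q - ℓ 0 q)) ≤ |d| * B := by
      calc -(d * (ℓ 1 q - ℓ 0 q)) ≤ |d * (ℓ 1 q - ℓ 0 q)| := neg_le_abs _
      _ = |d| * |ℓ 1 q - ℓ 0 q| := abs_mul _ _
      _ ≤ |d| * B := mul_le_mul_of_nonneg_left habsq (abs_nonneg _)
    linarith
  have e1 : sY * ℓ 1 v + (n - sY) * ℓ 0 v
      = n * (v * ℓ 1 v + (1 - v) * ℓ 0 v) + d * (ℓ 1 v - ℓ 0 v) := by rw [hd]; ring
  have e2 : sY * ℓ 1 q + (n - sY) * ℓ 0 q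
      = n * (v * ℓ 1 q + (1 - v) * ℓ 0 q) + d * (ℓ 1 q - ℓ 0 q) := by rw [hd]; ring
  rw [e1, e2]
  linarith

private lemma sum_loss_eq {T : ℕ} (y : Fin T → ℝ) (hy : ∀ t, y t = 0 ∨ y t = 1)
    (ℓ : ℝ → ℝ → ℝ) (C : Finset (Fin T)) (v : ℝ) :
    ∑ t ∈ C, ℓ (y t) v
      = (∑ t ∈ C, y t) * ℓ 1 v + ((C.card : ℝ) - ∑ t ∈ C, y t) * ℓ 0 v := by
  have h : ∀ t ∈ C, ℓ (y t) v = y t * ℓ 1 v + (1 - y t) * ℓ 0 v := by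
    intro t _
    rcases hy t with h | h <;> rw [h] <;> ring
  rw [Finset.sum_congr rfl h, Finset.sum_add_distrib, ← Finset.sum_mul, ← Finset.sum_mul,
    Finset.sum_sub_distrib, Finset.sum_const, nsmul_eq_mul, mul_one]

/-- Theorem 1, main result: if `ℓ` is a proper loss bounded by `B > 0`
varying by at most `B/N` on each grid interval, `N ≥ 3B/ε`, and on each nonempty bucket
`S_j = {t : p^F_t ∈ [j/N,(j+1)/N)}` the recalibrated grid-valued forecasts have ℓ1
calibration error at most `ε/(3B)`, then (a) the full sequence of recalibrated forecasts
has ℓ1 calibration error at most `ε/(3B)`, and (b) the average-loss regret of the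
recalibrated forecasts relative to the raw forecasts is at most `ε`. -/
theorem stmt7 (T N : ℕ) (ε B : ℝ) (hB : 0 < B) (hε : 0 < ε)
    (hN : 3 * B / ε ≤ (N : ℝ)) (y : Fin T → ℝ)
    (hy : ∀ t, y t = 0 ∨ y t = 1)
    (pF : Fin T → ℝ) (hpF : ∀ t, pF t ∈ Set.Ico (0:ℝ) 1)
    (p : Fin T → ℝ) (hp : ∀ t, ∃ i ∈ Finset.range (N + 1), p t = (i : ℝ) / N)
    (ℓ : ℝ → ℝ → ℝ)
    (hproper : ∀ p' ∈ Set.Icc (0:ℝ) 1, ∀ q ∈ Set.Icc (0:ℝ) 1,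
      p' * ℓ 1 p' + (1 - p') * ℓ 0 p' ≤ p' * ℓ 1 q + (1 - p') * ℓ 0 q)
    (hbound : ∀ y' ∈ ({0, 1} : Set ℝ), ∀ q ∈ Set.Icc (0:ℝ) 1,
      0 ≤ ℓ y' q ∧ ℓ y' q ≤ B)
    (hlip : ∀ y' ∈ ({0, 1} : Set ℝ), ∀ j ∈ Finset.range N,
      ∀ q ∈ Set.Ico ((j : ℝ) / N) (((j : ℝ) + 1) / N),
        |ℓ y' q - ℓ y' ((j : ℝ) / N)| ≤ B / N)
    (hcal : ∀ j ∈ Finset.range N, (bucket T N pF j).Nonempty →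
      calErrL1On T N p y (bucket T N pF j) ≤ ε / (3 * B)) :
    calErrL1On T N p y Finset.univ ≤ ε / (3 * B) ∧
    (1 / (T : ℝ)) * ∑ t, ℓ (y t) (p t) - (1 / (T : ℝ)) * ∑ t, ℓ (y t) (pF t) ≤ ε := by
  have hNR : (0:ℝ) < (N:ℝ) := lt_of_lt_of_le (by positivity) hN
  have hNne : (N:ℝ) ≠ 0 := ne_of_gt hNR
  -- handle T = 0
  rcases Nat.eq_zero_or_pos T with hT | hT
  · subst hT
    constructor
    · simp [calErrL1On]
      positivity
    · simp
      positivity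
  have hTR : (0:ℝ) < (T:ℝ) := by exact_mod_cast hT
  -- keys
  set key : Fin T → ℕ := fun t => ⌊(N:ℝ) * pF t⌋₊ with hkeydef
  have hkeymem : ∀ t : Fin T, key t ∈ Finset.range N := by
    intro t
    have h0 := (hpF t).1
    have h1 := (hpF t).2
    rw [Finset.mem_range]
    refine (Nat.floor_lt (mul_nonneg (Nat.cast_nonneg N) h0)).mpr ?_
    nlinarith
  have hbucket : ∀ j : ℕ, bucket T N pF j = Finset.univ.filter (fun t => key t = j) := by
    intro j
    ext t
    simp only [bucket, Finset.mem_filter, Finset.mem_univ, true_and, Set.mem_Ico, hkeydef]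
    rw [Nat.floor_eq_iff (mul_nonneg (Nat.cast_nonneg N) (hpF t).1)]
    constructor
    · rintro ⟨h1, h2⟩
      rw [div_le_iff₀ hNR] at h1
      rw [lt_div_iff₀ hNR] at h2
      constructor <;> nlinarith
    · rintro ⟨h1, h2⟩
      constructor
      · rw [div_le_iff₀ hNR]; nlinarith
      · rw [lt_div_iff₀ hNR]; nlinarith
  have hbfib : ∀ f : Fin T → ℝ,
      ∑ j ∈ Finset.range N, ∑ t ∈ bucket T N pF j, f t = ∑ t, f t := by
    intro f
    rw [← Finset.sum_fiberwise_of_maps_to (fun t _ => hkeymem t) f]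
    exact Finset.sum_congr rfl (fun j _ => by rw [hbucket j])
  set idx : Fin T → ℕ := fun t => ⌊(N:ℝ) * p t⌋₊ with hidxdef
  have hpidx : ∀ t, idx t ∈ Finset.range (N+1) ∧ p t = (idx t : ℝ)/N := by
    intro t
    obtain ⟨i, hi, hpi⟩ := hp t
    have hcalc : (N:ℝ) * ((i:ℝ)/N) = (i:ℝ) := by field_simp
    have hidxi : idx t = i := by
      simp only [hidxdef]
      rw [hpi, hcalc, Nat.floor_natCast]
    rw [hidxi]
    exact ⟨hi, hpi⟩
  have hfilter : ∀ (S : Finset (Fin T)) (i : ℕ),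
      S.filter (fun t => p t = (i:ℝ)/N) = S.filter (fun t => idx t = i) := by
    intro S i
    ext t
    simp only [Finset.mem_filter, and_congr_right_iff]
    intro _
    rw [(hpidx t).2]
    constructor
    · intro h
      have h' : ((idx t : ℝ)) = (i:ℝ) := by
        field_simp at h
        exact_mod_cast h
      exact_mod_cast h'
    · intro h; rw [h]
  have hfib : ∀ (S : Finset (Fin T)) (f : Fin T → ℝ),
      ∑ i ∈ Finset.range (N+1), ∑ t ∈ S.filter (fun t => p t = (i:ℝ)/N), f t
        = ∑ t ∈ S, f t := by
    intro S f
    rw [← Finset.sum_fiberwise_of_maps_to (fun t (_ : t ∈ S) => (hpidx t).1) f]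
    exact Finset.sum_congr rfl (fun i _ => by rw [hfilter S i])
  -- per-bucket calibration sums
  have hA : ∀ j ∈ Finset.range N,
      ∑ i ∈ Finset.range (N+1),
        |∑ t ∈ (bucket T N pF j).filter (fun t => p t = (i:ℝ)/N), (y t - (i:ℝ)/N)|
      ≤ ((bucket T N pF j).card : ℝ) * (ε/(3*B)) := by
    intro j hj
    rcases (bucket T N pF j).eq_empty_or_nonempty with he | hne
    · simp [he]
    · have hc := hcal j hj hne
      unfold calErrL1On at hc
      have hcpos : (0:ℝ) < ((bucket T N pF j).card : ℝ) := by
        exact_mod_cast Finset.card_pos.mpr hne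
      have h' := mul_le_mul_of_nonneg_left hc hcpos.le
      calc ∑ i ∈ Finset.range (N+1),
            |∑ t ∈ (bucket T N pF j).filter (fun t => p t = (i:ℝ)/N), (y t - (i:ℝ)/N)|
          = ((bucket T N pF j).card : ℝ) * ((1 / ((bucket T N pF j).card : ℝ)) *
            ∑ i ∈ Finset.range (N+1),
              |∑ t ∈ (bucket T N pF j).filter (fun t => p t = (i:ℝ)/N), (y t - (i:ℝ)/N)|) := by
            rw [← mul_assoc, mul_one_div_cancel hcpos.ne', one_mul]
        _ ≤ ((bucket T N pF j).card : ℝ) * (ε/(3*B)) := h'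
  have hsumc : ∑ j ∈ Finset.range N, ((bucket T N pF j).card : ℝ) = (T:ℝ) := by
    have h := hbfib (fun _ => (1:ℝ))
    simpa using h
  constructor
  · -- part (a)
    have hsplit : ∀ i ∈ Finset.range (N+1),
        |∑ t ∈ Finset.univ.filter (fun t => p t = (i:ℝ)/N), (y t - (i:ℝ)/N)|
        ≤ ∑ j ∈ Finset.range N,
            |∑ t ∈ (bucket T N pF j).filter (fun t => p t = (i:ℝ)/N), (y t - (i:ℝ)/N)| := by
      intro i _
      rw [← Finset.sum_fiberwise_of_maps_to
        (fun t (_ : t ∈ Finset.univ.filter (fun t => p t = (i:ℝ)/N)) => hkeymem t)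
        (fun t => y t - (i:ℝ)/N)]
      refine (Finset.abs_sum_le_sum_abs _ _).trans (le_of_eq ?_)
      refine Finset.sum_congr rfl (fun j _ => ?_)
      congr 1
      rw [hbucket j, Finset.filter_comm]
    have hsum1 : ∑ i ∈ Finset.range (N+1),
        |∑ t ∈ Finset.univ.filter (fun t => p t = (i:ℝ)/N), (y t - (i:ℝ)/N)|
        ≤ (T:ℝ) * (ε/(3*B)) := by
      calc ∑ i ∈ Finset.range (N+1),
            |∑ t ∈ Finset.univ.filter (fun t => p t = (i:ℝ)/N), (y t - (i:ℝ)/N)|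
          ≤ ∑ i ∈ Finset.range (N+1), ∑ j ∈ Finset.range N,
            |∑ t ∈ (bucket T N pF j).filter (fun t => p t = (i:ℝ)/N), (y t - (i:ℝ)/N)| :=
            Finset.sum_le_sum hsplit
        _ = ∑ j ∈ Finset.range N, ∑ i ∈ Finset.range (N+1),
            |∑ t ∈ (bucket T N pF j).filter (fun t => p t = (i:ℝ)/N), (y t - (i:ℝ)/N)| :=
            Finset.sum_comm
        _ ≤ ∑ j ∈ Finset.range N, ((bucket T N pF j).card : ℝ) * (ε/(3*B)) :=
            Finset.sum_le_sum hA
        _ = (∑ j ∈ Finset.range N, ((bucket T N pF j).card : ℝ)) * (ε/(3*B)) :=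
            (Finset.sum_mul _ _ _).symm
        _ = (T:ℝ) * (ε/(3*B)) := by rw [hsumc]
    unfold calErrL1On
    have hcardu : (((Finset.univ : Finset (Fin T)).card : ℕ) : ℝ) = (T:ℝ) := by simp
    rw [hcardu]
    have h := mul_le_mul_of_nonneg_left hsum1 (by positivity : (0:ℝ) ≤ 1/(T:ℝ))
    have he : (1/(T:ℝ)) * ((T:ℝ) * (ε/(3*B))) = ε/(3*B) := by field_simp
    linarith
  · -- part (b)
    have hBN3 : B/(N:ℝ) ≤ ε/3 := by
      rw [div_le_div_iff₀ hNR (by norm_num : (0:ℝ) < 3)]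
      have h3B := (div_le_iff₀ hε).mp hN
      linarith
    have hbkt : ∀ j ∈ Finset.range N,
        ∑ t ∈ bucket T N pF j, ℓ (y t) (p t)
          ≤ ∑ t ∈ bucket T N pF j, ℓ (y t) (pF t) + ((bucket T N pF j).card : ℝ) * ε := by
      intro j hj
      have hjN : (j:ℝ) ≤ (N:ℝ) := by exact_mod_cast (Finset.mem_range.mp hj).le
      have hqmem : (j:ℝ)/N ∈ Set.Icc (0:ℝ) 1 :=
        ⟨by positivity, by rw [div_le_one hNR]; exact hjN⟩
      have hcell : ∀ i ∈ Finset.range (N+1),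
          ∑ t ∈ (bucket T N pF j).filter (fun t => p t = (i:ℝ)/N), ℓ (y t) (p t)
          ≤ ∑ t ∈ (bucket T N pF j).filter (fun t => p t = (i:ℝ)/N), ℓ (y t) ((j:ℝ)/N)
            + 2*B*|∑ t ∈ (bucket T N pF j).filter (fun t => p t = (i:ℝ)/N), (y t - (i:ℝ)/N)| := by
        intro i hi
        set C := (bucket T N pF j).filter (fun t => p t = (i:ℝ)/N) with hC
        have h1 : ∑ t ∈ C, ℓ (y t) (p t) = ∑ t ∈ C, ℓ (y t) ((i:ℝ)/N) :=
          Finset.sum_congr rfl (fun t ht => by rw [(Finset.mem_filter.mp ht).2])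
        have hvmem : (i:ℝ)/N ∈ Set.Icc (0:ℝ) 1 := by
          constructor
          · positivity
          · rw [div_le_one hNR]
            exact_mod_cast Nat.lt_succ_iff.mp (Finset.mem_range.mp hi)
        have h2 := cell_ineq B ℓ hproper hbound ((i:ℝ)/N) ((j:ℝ)/N) hvmem hqmem
          (C.card) (∑ t ∈ C, y t) (Nat.cast_nonneg _)
        have h3 := sum_loss_eq y hy ℓ C ((i:ℝ)/N)
        have h4 := sum_loss_eq y hy ℓ C ((j:ℝ)/N)
        have h5 : ∑ t ∈ C, (y t - (i:ℝ)/N) = (∑ t ∈ C, y t) - (C.card:ℝ) * ((i:ℝ)/N) := by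
          rw [Finset.sum_sub_distrib, Finset.sum_const, nsmul_eq_mul]
        rw [h1, h3, h4, h5]
        exact h2
      have hstep1 : ∑ t ∈ bucket T N pF j, ℓ (y t) (p t)
          ≤ ∑ t ∈ bucket T N pF j, ℓ (y t) ((j:ℝ)/N)
            + 2*B*∑ i ∈ Finset.range (N+1),
              |∑ t ∈ (bucket T N pF j).filter (fun t => p t = (i:ℝ)/N), (y t - (i:ℝ)/N)| := by
        calc ∑ t ∈ bucket T N pF j, ℓ (y t) (p t)
            = ∑ i ∈ Finset.range (N+1),
                ∑ t ∈ (bucket T N pF j).filter (fun t => p t = (i:ℝ)/N), ℓ (y t) (p t) :=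
              (hfib _ _).symm
          _ ≤ ∑ i ∈ Finset.range (N+1),
              (∑ t ∈ (bucket T N pF j).filter (fun t => p t = (i:ℝ)/N), ℓ (y t) ((j:ℝ)/N)
                + 2*B*|∑ t ∈ (bucket T N pF j).filter (fun t => p t = (i:ℝ)/N), (y t - (i:ℝ)/N)|) :=
              Finset.sum_le_sum hcell
          _ = _ := by
              rw [Finset.sum_add_distrib, hfib (bucket T N pF j) (fun t => ℓ (y t) ((j:ℝ)/N)),
                ← Finset.mul_sum]
      have hstep2 : ∑ t ∈ bucket T N pF j, ℓ (y t) ((j:ℝ)/N)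
          ≤ ∑ t ∈ bucket T N pF j, ℓ (y t) (pF t) + ((bucket T N pF j).card:ℝ) * (B/N) := by
        have hpt : ∀ t ∈ bucket T N pF j, ℓ (y t) ((j:ℝ)/N) ≤ ℓ (y t) (pF t) + B/N := by
          intro t ht
          have hmem : pF t ∈ Set.Ico ((j:ℝ)/N) (((j:ℝ)+1)/N) := by
            simp only [bucket, Finset.mem_filter, Finset.mem_univ, true_and] at ht
            exact ht
          have hy' : y t ∈ ({0,1} : Set ℝ) := by rcases hy t with h|h <;> simp [h]
          have hl := abs_le.mp (hlip (y t) hy' j hj (pF t) hmem)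
          linarith [hl.1]
        calc ∑ t ∈ bucket T N pF j, ℓ (y t) ((j:ℝ)/N)
            ≤ ∑ t ∈ bucket T N pF j, (ℓ (y t) (pF t) + B/N) := Finset.sum_le_sum hpt
          _ = _ := by rw [Finset.sum_add_distrib, Finset.sum_const, nsmul_eq_mul]
      have hAj := hA j hj
      have e2B : 2*B*(∑ i ∈ Finset.range (N+1),
            |∑ t ∈ (bucket T N pF j).filter (fun t => p t = (i:ℝ)/N), (y t - (i:ℝ)/N)|)
          ≤ 2*B*(((bucket T N pF j).card:ℝ) * (ε/(3*B))) :=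
        mul_le_mul_of_nonneg_left hAj (by positivity)
      have e2B' : 2*B*(((bucket T N pF j).card:ℝ) * (ε/(3*B)))
          = 2*((bucket T N pF j).card:ℝ)*ε/3 := by
        linear_combination (2*((bucket T N pF j).card:ℝ)*ε/3) * mul_inv_cancel₀ hB.ne'
      have e3 : ((bucket T N pF j).card:ℝ)*(B/N) ≤ ((bucket T N pF j).card:ℝ)*(ε/3) :=
        mul_le_mul_of_nonneg_left hBN3 (Nat.cast_nonneg _)
      linarith
    have hfinal : ∑ t, ℓ (y t) (p t) ≤ ∑ t, ℓ (y t) (pF t) + (T:ℝ)*ε := by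
      calc ∑ t, ℓ (y t) (p t)
          = ∑ j ∈ Finset.range N, ∑ t ∈ bucket T N pF j, ℓ (y t) (p t) :=
            (hbfib _).symm
        _ ≤ ∑ j ∈ Finset.range N,
            (∑ t ∈ bucket T N pF j, ℓ (y t) (pF t) + ((bucket T N pF j).card : ℝ) * ε) :=
            Finset.sum_le_sum hbkt
        _ = ∑ t, ℓ (y t) (pF t) + (T:ℝ)*ε := by
            rw [Finset.sum_add_distrib, hbfib (fun t => ℓ (y t) (pF t)), ← Finset.sum_mul, hsumc]
    have h := mul_le_mul_of_nonneg_left hfinal (by positivity : (0:ℝ) ≤ 1/(T:ℝ))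
    have he : (1/(T:ℝ)) * ((∑ t, ℓ (y t) (pF t)) + (T:ℝ)*ε)
        = (1/(T:ℝ)) * (∑ t, ℓ (y t) (pF t)) + ε := by
      field_simp
    linarith
end
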